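/- For positive integers n, m, s, s' with n > m, 1 ≤ s, s' ≤ m, suppose φ̄ : ℤ[x₁,x₂] → ℤ[y₁,y₂] is a grading-preserving ring isomorphism (with all generators of degree 2) and α a nonzero integer such that φ̄(x₂^(m+1−s)(2x₁+x₂)^s) = α·y₂^(m+1−s')(2y₁+y₂)^(s'). Then s = s' or s + s' = m + 1. -/

import Mathlib

open MvPolynomial

private lemma deg_two (d : Fin 2 →₀ ℕ) : d.degree = d 0 + d 1 := by
  rw [Finsupp.degree_apply, Finset.sum_subset (Finset.subset_univ _)
    (by intro i _ hi; simpa using Finsupp.notMem_support_iff.mp hi), Fin.sum_univ_two]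

private lemma fin2_single (d : Fin 2 →₀ ℕ) (hd : d.degree = 1) :
    d = Finsupp.single 0 1 ∨ d = Finsupp.single 1 1 := by
  rw [deg_two] at hd
  rcases Nat.eq_zero_or_pos (d 0) with h0 | h0
  · right
    ext i
    fin_cases i <;> simp_all [Finsupp.single_apply] <;> omega
  · left
    ext i
    fin_cases i <;> simp_all [Finsupp.single_apply] <;> omega

private lemma linear_form (p : MvPolynomial (Fin 2) ℤ) (hp : p.IsHomogeneous 1) :
    p = C (coeff (Finsupp.single 0 1) p) * X 0 + C (coeff (Finsupp.single 1 1) p) * X 1 := by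
  ext d
  rw [coeff_add, coeff_C_mul, coeff_C_mul, coeff_X', coeff_X']
  by_cases h1 : d = Finsupp.single 0 1
  · subst h1
    have : ¬ (Finsupp.single (1 : Fin 2) 1 = Finsupp.single 0 1) := by
      intro h; simpa using DFunLike.congr_fun h (0 : Fin 2)
    simp [this]
  · by_cases h2 : d = Finsupp.single 1 1
    · subst h2
      have : ¬ (Finsupp.single (0 : Fin 2) 1 = Finsupp.single 1 1) := by
        intro h; simpa using DFunLike.congr_fun h (0 : Fin 2)
      simp [this]
    · have hz : coeff d p = 0 := by
        apply hp.coeff_eq_zero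
        intro hd
        rcases fin2_single d hd with h | h <;> simp_all
      rw [hz]
      have h1' : ¬ (Finsupp.single (0:Fin 2) 1 = d) := fun h => h1 h.symm
      have h2' : ¬ (Finsupp.single (1:Fin 2) 1 = d) := fun h => h2 h.symm
      simp [h1', h2']

theorem stmt9 (n m s s' : ℕ) (hmn : m < n)
    (hs1 : 1 ≤ s) (hsm : s ≤ m) (hs'1 : 1 ≤ s') (hs'm : s' ≤ m)
    (g : Fin 2 → MvPolynomial (Fin 2) ℤ)
    (hg : ∀ i, (g i).IsHomogeneous 1)
    (hbij : Function.Bijective ⇑(MvPolynomial.aeval (R := ℤ) g))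
    (α : ℤ) (hα : α ≠ 0)
    (heq : MvPolynomial.aeval (R := ℤ) g ((X 1 : MvPolynomial (Fin 2) ℤ) ^ (m + 1 - s) * (2 * X 0 + X 1) ^ s)
        = C α * ((X 1 : MvPolynomial (Fin 2) ℤ) ^ (m + 1 - s') * (2 * X 0 + X 1) ^ s')) :
    s = s' ∨ s + s' = m + 1 := by
  -- notation
  set p := m + 1 - s with hp
  set p' := m + 1 - s' with hp'
  have hp1 : 1 ≤ p := by omega
  have hp'1 : 1 ≤ p' := by omega
  set P : MvPolynomial (Fin 2) ℤ := g 1 with hPdef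
  set Q : MvPolynomial (Fin 2) ℤ := 2 * g 0 + g 1 with hQdef
  have hQhom : Q.IsHomogeneous 1 := by
    have h2 : ((2 : MvPolynomial (Fin 2) ℤ)).IsHomogeneous 0 := by
      simpa using isHomogeneous_C (σ := Fin 2) (2 : ℤ)
    simpa using (h2.mul (hg 0)).add (hg 1)
  have haQ : (aeval (R := ℤ) g) (2 * X 0 + X 1) = Q := by
    simp [hQdef, map_ofNat]
  have haP : (aeval (R := ℤ) g) (X 1) = P := by simp [hPdef]
  have heq' : P ^ p * Q ^ s = C α * (X 1 ^ p' * (2 * X 0 + X 1) ^ s') := by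
    rw [← heq, map_mul, map_pow, map_pow, haQ, haP]
  set a := coeff (Finsupp.single 0 1) P with ha
  set b := coeff (Finsupp.single 1 1) P with hb
  set c := coeff (Finsupp.single 0 1) Q with hc
  set d := coeff (Finsupp.single 1 1) Q with hd
  have hP : P = C a * X 0 + C b * X 1 := linear_form P (hg 1)
  have hQ : Q = C c * X 0 + C d * X 1 := linear_form Q hQhom
  have hinj := hbij.injective
  -- P ≠ 0 and Q ≠ 0
  have hPne : P ≠ 0 := by
    intro h
    have : (aeval (R := ℤ) g) (X 1) = (aeval (R := ℤ) g) 0 := by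
      rw [map_zero, haP, h]
    exact X_ne_zero 1 (hinj this)
  have hQne : Q ≠ 0 := by
    intro h
    have : (aeval (R := ℤ) g) (2 * X 0 + X 1) = (aeval (R := ℤ) g) 0 := by
      rw [map_zero, haQ, h]
    have h2 : (2 * X 0 + X 1 : MvPolynomial (Fin 2) ℤ) = 0 := hinj this
    have := congrArg (eval (fun i : Fin 2 => if i = 0 then (1:ℤ) else 0)) h2
    simp at this
  -- not both a = 0 and c = 0
  have hnotboth : ¬ (a = 0 ∧ c = 0) := by
    rintro ⟨ha0, hc0⟩
    -- then P = C b * X 1, Q = C d * X 1, and injectivity forces contradiction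
    have hbne : b ≠ 0 := by
      intro hb0
      rw [ha0, hb0] at hP
      simp at hP
      exact hPne hP
    have key : (aeval (R := ℤ) g) (C d * X 1) = (aeval (R := ℤ) g) (C b * (2 * X 0 + X 1)) := by
      rw [map_mul, map_mul, haQ, aeval_C, aeval_C, haP, hP, hQ, ha0, hc0, algebraMap_eq]
      simp [C_0, mul_comm, mul_assoc, mul_left_comm]
    have h2 := hinj key
    have := congrArg (eval (fun i : Fin 2 => if i = 0 then (1:ℤ) else 0)) h2
    simp at this
    exact hbne (by omega)
  -- Step B: a = 0 or c = 0
  have hac : a = 0 ∨ c = 0 := by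
    have := congrArg (eval (fun i : Fin 2 => if i = 0 then (1:ℤ) else 0)) heq'
    rw [hP, hQ] at this
    simp [zero_pow (by omega : p' ≠ 0)] at this
    rcases this with ⟨h, _⟩ | ⟨h, _⟩
    · exact Or.inl h
    · exact Or.inr h
  -- Step C: map to Polynomial ℤ via X0 ↦ X, X1 ↦ 1
  set e : MvPolynomial (Fin 2) ℤ →+* Polynomial ℤ :=
    eval₂Hom Polynomial.C (fun i => if i = 0 then Polynomial.X else 1) with he
  have heq2 := congrArg e heq'
  rw [hP, hQ] at heq2
  simp only [he, map_mul, map_pow, map_add, eval₂Hom_X', eval₂Hom_C, coe_eval₂Hom] at heq2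
  norm_num at heq2
  simp only [← Polynomial.C_eq_intCast, Int.cast_id] at heq2
  -- heq2 : (C a * X + C b)^p * (C c * X + C d)^s = C α * (2*X+1)^s'  (roughly)
  rcases hac with ha0 | hc0
  · -- a = 0 : degree count gives s = s'
    left
    have hcne : c ≠ 0 := fun h => hnotboth ⟨ha0, h⟩
    have hbne : b ≠ 0 := by
      intro hb0
      rw [ha0, hb0] at hP
      simp at hP
      exact hPne hP
    rw [ha0] at heq2
    simp only [map_zero, zero_mul, zero_add] at heq2
    have hlin1 : (Polynomial.C c * Polynomial.X + Polynomial.C d).natDegree = 1 :=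
      Polynomial.natDegree_linear hcne
    have hlin2 : ((2 : Polynomial ℤ) * Polynomial.X + 1).natDegree = 1 := by
      have h2 : ((2 : Polynomial ℤ) * Polynomial.X + 1)
          = Polynomial.C 2 * Polynomial.X + Polynomial.C 1 := by
        rw [map_one, map_ofNat]
      rw [h2, Polynomial.natDegree_linear (by norm_num)]
    have hne1 : Polynomial.C c * Polynomial.X + Polynomial.C d ≠ 0 := by
      intro h; rw [h, Polynomial.natDegree_zero] at hlin1; omega
    have hne2 : (2 : Polynomial ℤ) * Polynomial.X + 1 ≠ 0 := by
      intro h; rw [h, Polynomial.natDegree_zero] at hlin2; omega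
    have := congrArg Polynomial.natDegree heq2
    rw [Polynomial.natDegree_mul (pow_ne_zero _ (Polynomial.C_ne_zero.mpr hbne))
          (pow_ne_zero _ hne1),
        Polynomial.natDegree_mul (by simpa using hα) (pow_ne_zero _ hne2),
        Polynomial.natDegree_pow, Polynomial.natDegree_pow, Polynomial.natDegree_pow,
        hlin1, hlin2, Polynomial.natDegree_C] at this
    simpa using this
  · -- c = 0 : degree count gives p = s'
    right
    have hane : a ≠ 0 := fun h => hnotboth ⟨h, hc0⟩
    have hdne : d ≠ 0 := by
      intro hd0
      rw [hc0, hd0] at hQ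
      simp at hQ
      exact hQne hQ
    rw [hc0] at heq2
    simp only [map_zero, zero_mul, zero_add] at heq2
    have hlin1 : (Polynomial.C a * Polynomial.X + Polynomial.C b).natDegree = 1 :=
      Polynomial.natDegree_linear hane
    have hlin2 : ((2 : Polynomial ℤ) * Polynomial.X + 1).natDegree = 1 := by
      have h2 : ((2 : Polynomial ℤ) * Polynomial.X + 1)
          = Polynomial.C 2 * Polynomial.X + Polynomial.C 1 := by
        rw [map_one, map_ofNat]
      rw [h2, Polynomial.natDegree_linear (by norm_num)]
    have hne1 : Polynomial.C a * Polynomial.X + Polynomial.C b ≠ 0 := by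
      intro h; rw [h, Polynomial.natDegree_zero] at hlin1; omega
    have hne2 : (2 : Polynomial ℤ) * Polynomial.X + 1 ≠ 0 := by
      intro h; rw [h, Polynomial.natDegree_zero] at hlin2; omega
    have := congrArg Polynomial.natDegree heq2
    rw [Polynomial.natDegree_mul (pow_ne_zero _ hne1)
          (pow_ne_zero _ (Polynomial.C_ne_zero.mpr hdne)),
        Polynomial.natDegree_mul (by simpa using hα) (pow_ne_zero _ hne2),
        Polynomial.natDegree_pow, Polynomial.natDegree_pow, Polynomial.natDegree_pow,
        hlin1, hlin2, Polynomial.natDegree_C] at this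
    simp only [Polynomial.natDegree_C] at this
    omega
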